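/- Let K_c and K_d be positive integers, K = K_c + K_d, and let h(p) = K_c(1-p)/(1+K_c p) + ((1-p)/p)(1 - (1-p)^{K_d}) for p ∈ (0,1). Then lim_{p→0⁺} h(p) = K and lim_{p→0⁺} (h(p) - K)/p = -(K_c² + K + C(K_d, 2)). (First-order Taylor approximation of the hybrid TDMA coded caching delay with a single transmitter in the low-memory regime: T_Hybrid ≈ K - (M/N)(K_c² + K + C(K_d,2)).) -/

import Mathlib

open Filter Topology

lemma sum_range_id_choose (n : ℕ) :
    (∑ j ∈ Finset.range n, j) = n.choose 2 := by
  induction n with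
  | zero => simp
  | succ n ih =>
    rw [Finset.sum_range_succ, ih]
    have : (n + 1).choose 2 = n.choose 1 + n.choose 2 := Nat.choose_succ_succ n 1
    simp [Nat.choose_one_right] at this
    omega

lemma sum_range_succ_id (n : ℕ) :
    (∑ j ∈ Finset.range n, (j + 1)) = n + n.choose 2 := by
  induction n with
  | zero => simp
  | succ n ih =>
    rw [Finset.sum_range_succ, ih]
    have : (n + 1).choose 2 = n.choose 1 + n.choose 2 := Nat.choose_succ_succ n 1
    simp [Nat.choose_one_right] at this
    omega

theorem hybrid_delay_taylor (Kc Kd : ℕ) (hKc : 0 < Kc) (hKd : 0 < Kd)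
    (K : ℕ) (hK : K = Kc + Kd)
    (h : ℝ → ℝ)
    (hh : ∀ p : ℝ, h p =
        Kc * (1 - p) / (1 + Kc * p) + ((1 - p) / p) * (1 - (1 - p) ^ Kd)) :
    Tendsto h (nhdsWithin 0 (Set.Ioi 0)) (nhds (K : ℝ)) ∧
      Tendsto (fun p : ℝ => (h p - K) / p) (nhdsWithin 0 (Set.Ioi 0))
        (nhds (-((Kc : ℝ) ^ 2 + K + (Kd.choose 2 : ℝ)))) := by
  set g : ℝ → ℝ := fun p =>
    (Kc : ℝ) * (1 - p) / (1 + (Kc : ℝ) * p) + ∑ j ∈ Finset.range Kd, (1 - p) ^ (j + 1)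
    with hg_def
  -- h agrees with g on Ioi 0
  have heq : ∀ p ∈ Set.Ioi (0:ℝ), h p = g p := by
    intro p hp
    have hp0 : p ≠ 0 := ne_of_gt hp
    have hx : (1 - p : ℝ) ≠ 1 := by intro hc; apply hp0; linarith
    have hgeo : ∑ j ∈ Finset.range Kd, (1 - p) ^ j = ((1 - p) ^ Kd - 1) / ((1 - p) - 1) :=
      geom_sum_eq hx Kd
    have hsum : ∑ j ∈ Finset.range Kd, (1 - p) ^ (j + 1)
        = (1 - p) * (((1 - p) ^ Kd - 1) / ((1 - p) - 1)) := by
      rw [← hgeo, Finset.mul_sum]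
      exact Finset.sum_congr rfl fun j _ => by ring
    rw [hh]
    simp only [hg_def]
    rw [hsum]
    have : ((1 - p) - 1 : ℝ) = -p := by ring
    rw [this]
    congr 1
    rw [div_neg]
    ring
  -- value of g at 0
  have hg0 : g 0 = (K : ℝ) := by
    simp [hg_def, hK]
  -- derivative of g at 0
  have hderiv : HasDerivAt g (-((Kc : ℝ) ^ 2 + K + (Kd.choose 2 : ℝ))) 0 := by
    have hu : HasDerivAt (fun p : ℝ => (Kc : ℝ) * (1 - p)) (-(Kc : ℝ)) 0 := by
      simpa using ((hasDerivAt_const (0:ℝ) (1:ℝ)).sub (hasDerivAt_id 0)).const_mul (Kc : ℝ)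
    have hv : HasDerivAt (fun p : ℝ => 1 + (Kc : ℝ) * p) (Kc : ℝ) 0 := by
      simpa using ((hasDerivAt_id (0:ℝ)).const_mul (Kc : ℝ)).const_add 1
    have hv0 : (fun p : ℝ => 1 + (Kc : ℝ) * p) 0 ≠ 0 := by norm_num
    have h1 := hu.div hv hv0
    have h2 : HasDerivAt (fun p : ℝ => ∑ j ∈ Finset.range Kd, (1 - p) ^ (j + 1))
        (∑ j ∈ Finset.range Kd, -((j : ℝ) + 1)) 0 := by
      apply HasDerivAt.fun_sum
      intro j _
      have hb : HasDerivAt (fun p : ℝ => (1 - p)) (-1 : ℝ) 0 := by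
        simpa using (hasDerivAt_const (0:ℝ) (1:ℝ)).fun_sub (hasDerivAt_id 0)
      simpa using hb.fun_pow (j + 1)
    have := h1.add h2
    refine this.congr_deriv (Eq.symm ?_)
    have h3 : (∑ x ∈ Finset.range Kd, (x : ℝ)) = ((Kd.choose 2 : ℕ) : ℝ) := by
      rw [← sum_range_id_choose]
      push_cast
      rfl
    have hsum : (∑ j ∈ Finset.range Kd, -((j : ℝ) + 1))
        = -((Kd : ℝ) + (Kd.choose 2 : ℝ)) := by
      simp [Finset.sum_add_distrib, h3]
      ring
    rw [hsum, hK]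
    push_cast
    field_simp
    ring
  constructor
  · have := hderiv.continuousAt.tendsto
    rw [hg0] at this
    refine Tendsto.congr' ?_ (this.mono_left nhdsWithin_le_nhds)
    filter_upwards [eventually_mem_nhdsWithin] with p hp
    exact (heq p hp).symm
  · have hslope := hasDerivAt_iff_tendsto_slope.mp hderiv
    have hmono : (nhdsWithin (0:ℝ) (Set.Ioi 0)) ≤ nhdsWithin 0 {(0:ℝ)}ᶜ :=
      nhdsWithin_mono 0 (fun x hx => ne_of_gt hx)
    refine Tendsto.congr' ?_ (hslope.mono_left hmono)
    filter_upwards [eventually_mem_nhdsWithin] with p hp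
    have hp0 : p ≠ 0 := ne_of_gt hp
    simp only [slope, heq p hp, hg0, sub_zero]
    rw [smul_eq_mul, inv_mul_eq_div, vsub_eq_sub]
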